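/- Let Γ be a positive, decreasing, continuously differentiable function on [0,∞) with ∫₀^∞ t^d Γ(t) dt < ∞ and t^{d-1}Γ(t) → 0 as t → ∞, for some integer d ≥ 0. Write g(y) = -Γ'(y)/Γ(y) and G(y) = ∫_y^∞ t^d Γ(t) dt. If g(y) ≤ α y for all y > ȳ (where α > 0, ȳ ≥ 0), then for every ε > 0 and all y > max(ȳ, sqrt(|d-1| (1/(ε α²) - 1/α))), one has G(y) ≥ (1/α - ε) y^{d-1} Γ(y). -/

import Mathlib

open MeasureTheory Set Filter

/-- Gaussian-type estimate, lower bound version (Lemma A.1(ii)). -/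
theorem stmt1 (d : ℕ) (Γ Γ' : ℝ → ℝ)
    (hpos : ∀ t : ℝ, 0 ≤ t → 0 < Γ t)
    (hanti : AntitoneOn Γ (Ici 0))
    (hderiv : ∀ t : ℝ, 0 ≤ t → HasDerivAt Γ (Γ' t) t)
    (hcont : ContinuousOn Γ' (Ici 0))
    (hint : IntegrableOn (fun t => t ^ (d : ℝ) * Γ t) (Ioi 0))
    (hlim : Tendsto (fun t => t ^ ((d : ℝ) - 1) * Γ t) atTop (nhds 0))
    (α ybar : ℝ) (hα : 0 < α) (hybar : 0 ≤ ybar)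
    (hg : ∀ y : ℝ, ybar < y → -Γ' y / Γ y ≤ α * y) :
    ∀ ε : ℝ, 0 < ε → ∀ y : ℝ,
      max ybar (Real.sqrt (|(d : ℝ) - 1| * (1 / (ε * α ^ 2) - 1 / α))) < y →
      (1 / α - ε) * y ^ ((d : ℝ) - 1) * Γ y ≤ ∫ t in Ioi y, t ^ (d : ℝ) * Γ t := by
  intro ε hε y hy
  have hyb : ybar < y := lt_of_le_of_lt (le_max_left _ _) hy
  have hy0 : 0 < y := lt_of_le_of_lt (le_trans hybar (le_max_left _ _)) hy
  have hsq : Real.sqrt (|(d : ℝ) - 1| * (1 / (ε * α ^ 2) - 1 / α)) < y :=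
    lt_of_le_of_lt (le_max_right _ _) hy
  have hkey : |(d : ℝ) - 1| * (1 / (ε * α ^ 2) - 1 / α) < y ^ 2 :=
    (Real.sqrt_lt' hy0).1 hsq
  -- derivative is nonpositive on (0, ∞)
  have hΓ'le : ∀ t : ℝ, 0 ≤ t → Γ' t ≤ 0 := by
    intro t ht
    have hslope : Tendsto (slope Γ t) (nhdsWithin t (Ioi t)) (nhds (Γ' t)) :=
      (hasDerivAt_iff_tendsto_slope.1 (hderiv t ht)).mono_left
        (nhdsWithin_mono _ (fun x hx => ne_of_gt hx))
    refine le_of_tendsto hslope ?_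
    filter_upwards [self_mem_nhdsWithin] with x hx
    have hx' : t < x := hx
    have h1 : Γ x ≤ Γ t := hanti ht (le_trans ht hx'.le) hx'.le
    have : slope Γ t x = (Γ x - Γ t) / (x - t) := by
      simp [slope_def_field, div_eq_div_iff]
    rw [this]
    exact div_nonpos_of_nonpos_of_nonneg (by linarith) (by linarith)
  -- pointwise bound -Γ' t ≤ α t Γ t for t > ybar
  have hbound : ∀ t : ℝ, ybar < t → -Γ' t ≤ α * t * Γ t := by
    intro t ht
    have ht0 : 0 ≤ t := le_trans hybar ht.le
    have := hg t ht
    have hΓt := hpos t ht0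
    calc -Γ' t = (-Γ' t / Γ t) * Γ t := by field_simp
    _ ≤ (α * t) * Γ t := by
        apply mul_le_mul_of_nonneg_right this hΓt.le
  have hΓcont : ContinuousOn Γ (Ici 0) := fun t ht =>
    (hderiv t ht).continuousAt.continuousWithinAt
  have hsub : Ioi y ⊆ Ici (0:ℝ) := fun t ht => le_of_lt (lt_trans hy0 ht)
  -- integrability facts
  have hintG : IntegrableOn (fun t => t ^ (d : ℝ) * Γ t) (Ioi y) :=
    hint.mono_set (Ioi_subset_Ioi hy0.le)
  have hGnonneg : ∀ t ∈ Ioi y, 0 ≤ t ^ (d : ℝ) * Γ t := by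
    intro t ht
    have ht0 : 0 < t := lt_trans hy0 ht
    exact mul_nonneg (Real.rpow_nonneg ht0.le _) (hpos t ht0.le).le
  have hmeasI : AEStronglyMeasurable (fun t => t ^ ((d : ℝ) - 2) * Γ t)
      (volume.restrict (Ioi y)) := by
    apply ContinuousOn.aestronglyMeasurable _ measurableSet_Ioi
    intro t ht
    exact ((Real.continuousAt_rpow_const t _ (Or.inl (ne_of_gt (lt_trans hy0 ht)))).continuousWithinAt).mul
      ((hΓcont t (hsub ht)).mono hsub)
  have hboundI : ∀ t ∈ Ioi y, t ^ ((d : ℝ) - 2) * Γ t ≤ y ^ (-2 : ℝ) * (t ^ (d : ℝ) * Γ t) := by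
    intro t ht
    have ht0 : 0 < t := lt_trans hy0 ht
    have h1 : t ^ ((d : ℝ) - 2) = t ^ (d : ℝ) * t ^ (-2 : ℝ) := by
      rw [← Real.rpow_add ht0]; ring_nf
    have h2 : t ^ (-2 : ℝ) ≤ y ^ (-2 : ℝ) := by
      rw [Real.rpow_neg ht0.le, Real.rpow_neg hy0.le]
      apply inv_anti₀ (Real.rpow_pos_of_pos hy0 _)
      exact Real.rpow_le_rpow hy0.le (le_of_lt ht) (by norm_num)
    calc t ^ ((d : ℝ) - 2) * Γ t = t ^ (-2 : ℝ) * (t ^ (d : ℝ) * Γ t) := by rw [h1]; ring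
    _ ≤ y ^ (-2 : ℝ) * (t ^ (d : ℝ) * Γ t) :=
        mul_le_mul_of_nonneg_right h2 (hGnonneg t ht)
  have hIposfun : ∀ t ∈ Ioi y, 0 ≤ t ^ ((d : ℝ) - 2) * Γ t := by
    intro t ht
    have ht0 : 0 < t := lt_trans hy0 ht
    exact mul_nonneg (Real.rpow_nonneg ht0.le _) (hpos t ht0.le).le
  have hintI : IntegrableOn (fun t => t ^ ((d : ℝ) - 2) * Γ t) (Ioi y) := by
    apply Integrable.mono' (hintG.const_mul (y ^ (-2:ℝ))) hmeasI
    filter_upwards [ae_restrict_mem measurableSet_Ioi] with t ht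
    rw [Real.norm_eq_abs, abs_of_nonneg (hIposfun t ht)]
    exact hboundI t ht
  have hmeasD : AEStronglyMeasurable (fun t => t ^ ((d : ℝ) - 1) * Γ' t)
      (volume.restrict (Ioi y)) := by
    apply ContinuousOn.aestronglyMeasurable _ measurableSet_Ioi
    intro t ht
    exact ((Real.continuousAt_rpow_const t _ (Or.inl (ne_of_gt (lt_trans hy0 ht)))).continuousWithinAt).mul
      ((hcont t (hsub ht)).mono hsub)
  have hboundD : ∀ t ∈ Ioi y, ‖t ^ ((d : ℝ) - 1) * Γ' t‖ ≤ α * (t ^ (d : ℝ) * Γ t) := by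
    intro t ht
    have ht0 : 0 < t := lt_trans hy0 ht
    have h1 : ‖t ^ ((d : ℝ) - 1) * Γ' t‖ = t ^ ((d : ℝ) - 1) * (-Γ' t) := by
      rw [Real.norm_eq_abs, abs_mul, abs_of_nonneg (Real.rpow_nonneg ht0.le _),
        abs_of_nonpos (hΓ'le t ht0.le)]
    rw [h1]
    have h2 : t ^ ((d : ℝ) - 1) * (-Γ' t) ≤ t ^ ((d : ℝ) - 1) * (α * t * Γ t) :=
      mul_le_mul_of_nonneg_left (hbound t (lt_trans hyb ht)) (Real.rpow_nonneg ht0.le _)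
    refine le_trans h2 (le_of_eq ?_)
    have h3 : t ^ ((d : ℝ) - 1) * t = t ^ (d : ℝ) := by
      nth_rewrite 2 [← Real.rpow_one t]
      rw [← Real.rpow_add ht0]; ring_nf
    calc t ^ ((d : ℝ) - 1) * (α * t * Γ t) = α * ((t ^ ((d : ℝ) - 1) * t) * Γ t) := by ring
    _ = α * (t ^ (d : ℝ) * Γ t) := by rw [h3]
  have hintD : IntegrableOn (fun t => t ^ ((d : ℝ) - 1) * Γ' t) (Ioi y) := by
    apply Integrable.mono' (hintG.const_mul α) hmeasD
    filter_upwards [ae_restrict_mem measurableSet_Ioi] with t ht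
    exact hboundD t ht
  -- integration by parts on (y, ∞)
  have hIBP : ∫ t in Ioi y,
      (((d : ℝ) - 1) * (t ^ ((d : ℝ) - 2) * Γ t) + t ^ ((d : ℝ) - 1) * Γ' t)
      = 0 - y ^ ((d : ℝ) - 1) * Γ y := by
    apply integral_Ioi_of_hasDerivAt_of_tendsto
    · exact ((Real.continuousAt_rpow_const y _ (Or.inl (ne_of_gt hy0))).continuousWithinAt).mul
        ((hΓcont y hy0.le).mono (Ici_subset_Ici.2 hy0.le))
    · intro x hx
      have hx0 : 0 < x := lt_trans hy0 hx
      have h1 : HasDerivAt (fun t : ℝ => t ^ ((d : ℝ) - 1))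
          (((d : ℝ) - 1) * x ^ ((d : ℝ) - 1 - 1)) x :=
        Real.hasDerivAt_rpow_const (Or.inl (ne_of_gt hx0))
      have h2 := h1.mul (hderiv x hx0.le)
      refine h2.congr_deriv ?_
      rw [show ((d:ℝ) - 1 - 1) = (d:ℝ) - 2 by ring]; ring
    · exact (hintI.const_mul _).add hintD
    · exact hlim
  have hsplit : ∫ t in Ioi y,
      (((d : ℝ) - 1) * (t ^ ((d : ℝ) - 2) * Γ t) + t ^ ((d : ℝ) - 1) * Γ' t)
      = ((d : ℝ) - 1) * (∫ t in Ioi y, t ^ ((d : ℝ) - 2) * Γ t)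
        + ∫ t in Ioi y, t ^ ((d : ℝ) - 1) * Γ' t := by
    rw [integral_add (hintI.const_mul _) hintD, integral_const_mul]
  set G := ∫ t in Ioi y, t ^ (d : ℝ) * Γ t with hG
  set I := ∫ t in Ioi y, t ^ ((d : ℝ) - 2) * Γ t with hI
  set J := ∫ t in Ioi y, t ^ ((d : ℝ) - 1) * Γ' t with hJ
  have hJeq : J = - (y ^ ((d : ℝ) - 1) * Γ y) - ((d : ℝ) - 1) * I := by
    have := hIBP
    rw [hsplit] at this
    linarith
  -- -J ≤ α G
  have hJle : -J ≤ α * G := by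
    have h1 : ∫ t in Ioi y, (-(t ^ ((d : ℝ) - 1) * Γ' t))
        = -J := by rw [hJ, integral_neg]
    have h2 : (∫ t in Ioi y, (-(t ^ ((d : ℝ) - 1) * Γ' t)))
        ≤ ∫ t in Ioi y, α * (t ^ (d : ℝ) * Γ t) := by
      apply setIntegral_mono_on hintD.neg (hintG.const_mul α) measurableSet_Ioi
      intro t ht
      calc -(t ^ ((d : ℝ) - 1) * Γ' t) ≤ ‖t ^ ((d : ℝ) - 1) * Γ' t‖ := neg_le_abs _
      _ ≤ α * (t ^ (d : ℝ) * Γ t) := hboundD t ht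
    rw [h1, integral_const_mul] at h2
    exact h2
  have hInonneg : 0 ≤ I := setIntegral_nonneg measurableSet_Ioi hIposfun
  have hGnonneg' : 0 ≤ G := setIntegral_nonneg measurableSet_Ioi hGnonneg
  have hIle : I ≤ y ^ (-2 : ℝ) * G := by
    have h2 : I ≤ ∫ t in Ioi y, y ^ (-2 : ℝ) * (t ^ (d : ℝ) * Γ t) := by
      apply setIntegral_mono_on hintI (hintG.const_mul _) measurableSet_Ioi hboundI
    rw [integral_const_mul] at h2
    exact h2
  -- main inequality: y^(d-1) Γ y ≤ (α + |d-1|/y^2) * G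
  have hmain : y ^ ((d : ℝ) - 1) * Γ y ≤ (α + |(d : ℝ) - 1| * y ^ (-2 : ℝ)) * G := by
    have h1 : y ^ ((d : ℝ) - 1) * Γ y = -J - ((d : ℝ) - 1) * I := by
      rw [hJeq]; ring
    have h2 : -((d : ℝ) - 1) * I ≤ |(d : ℝ) - 1| * I :=
      mul_le_mul_of_nonneg_right (neg_le_abs _) hInonneg
    have h3 : |(d : ℝ) - 1| * I ≤ |(d : ℝ) - 1| * (y ^ (-2 : ℝ) * G) :=
      mul_le_mul_of_nonneg_left hIle (abs_nonneg _)
    nlinarith [hJle]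
  -- conclude
  have hΓy : 0 < Γ y := hpos y hy0.le
  have hypow : 0 ≤ y ^ ((d : ℝ) - 1) := Real.rpow_nonneg hy0.le _
  rcases le_or_gt (1 / α - ε) 0 with hc | hc
  · have h0 : (1 / α - ε) * y ^ ((d : ℝ) - 1) * Γ y ≤ 0 :=
      mul_nonpos_of_nonpos_of_nonneg (mul_nonpos_of_nonpos_of_nonneg hc hypow) hΓy.le
    linarith
  · have hy2 : y ^ (-2 : ℝ) = (y ^ 2)⁻¹ := by
      rw [Real.rpow_neg hy0.le]
      congr 1
      rw [show (2:ℝ) = ((2:ℕ):ℝ) by norm_num, Real.rpow_natCast]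
    have hy2pos : 0 < y ^ 2 := by positivity
    have hcK : (1 / α - ε) * (α + |(d : ℝ) - 1| * y ^ (-2 : ℝ)) ≤ 1 := by
      rw [hy2]
      have hfa : (1 / α - ε) * α = 1 - ε * α := by field_simp
      have hnum : 0 < 1 - ε * α := by rw [← hfa]; exact mul_pos hc hα
      have hεα2 : (0:ℝ) < ε * α ^ 2 := by positivity
      have key' : |(d : ℝ) - 1| * (1 - ε * α) < ε * α ^ 2 * y ^ 2 := by
        have h := mul_lt_mul_of_pos_right hkey hεα2
        have e : |(d : ℝ) - 1| * (1 / (ε * α ^ 2) - 1 / α) * (ε * α ^ 2)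
            = |(d : ℝ) - 1| * (1 - ε * α) := by field_simp
        rw [e] at h
        linarith
      have h3 : (1 / α - ε) * |(d : ℝ) - 1| * (y ^ 2)⁻¹ ≤ ε * α := by
        rw [← div_eq_mul_inv, div_le_iff₀ hy2pos, ← mul_le_mul_iff_left₀ hα]
        have e2 : (1 / α - ε) * |(d : ℝ) - 1| * α = |(d : ℝ) - 1| * (1 - ε * α) := by
          rw [mul_right_comm, hfa]; ring
        rw [e2]
        nlinarith [key']
      have expand : (1 / α - ε) * (α + |(d : ℝ) - 1| * (y ^ 2)⁻¹)
          = (1 - ε * α) + (1 / α - ε) * |(d : ℝ) - 1| * (y ^ 2)⁻¹ := by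
        rw [mul_add, hfa]; ring
      rw [expand]
      linarith
    calc (1 / α - ε) * y ^ ((d : ℝ) - 1) * Γ y
        ≤ (1 / α - ε) * ((α + |(d : ℝ) - 1| * y ^ (-2 : ℝ)) * G) := by
          rw [mul_assoc]
          exact mul_le_mul_of_nonneg_left hmain hc.le
    _ = ((1 / α - ε) * (α + |(d : ℝ) - 1| * y ^ (-2 : ℝ))) * G := by ring
    _ ≤ 1 * G := mul_le_mul_of_nonneg_right hcK hGnonneg'
    _ = G := one_mul G
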